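/- Let h be a finite-dimensional real vector space with a non-degenerate symmetric bilinear form ⟨-,-⟩, let Λ ⊂ h be a discrete subgroup (lattice), let Λ* = {μ ∈ h : ⟨μ, Λ⟩ ⊆ ℤ}, and let Λ⊥ = {μ ∈ h : ⟨μ, Λ⟩ = 0}. Then there exists a finitely generated free abelian subgroup Γ ⊆ Λ* such that Λ* = Λ⊥ ⊕ Γ as an internal direct sum of ℤ-modules. -/

import Mathlib

/-- Let `h` be a finite-dimensional real vector space with a
non-degenerate symmetric bilinear form `B`, let `Λ ⊂ h` be a discrete subgroup
(lattice), let `dual = Λ* = {μ : B μ Λ ⊆ ℤ}` and `perp = Λ⊥ = {μ : B μ Λ = 0}`.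
Then there is a finitely generated free abelian subgroup `Γ ⊆ Λ*` with
`Λ* = Λ⊥ ⊕ Γ` as an internal direct sum of ℤ-modules. -/
theorem stmt2 {h : Type*} [NormedAddCommGroup h] [NormedSpace ℝ h]
    [FiniteDimensional ℝ h]
    (B : h →ₗ[ℝ] h →ₗ[ℝ] ℝ)
    (hsymm : ∀ x y, B x y = B y x)
    (hnondeg : ∀ x, (∀ y, B x y = 0) → x = 0)
    (Λ dual perp : AddSubgroup h) [DiscreteTopology Λ]
    (hdual : ∀ μ, μ ∈ dual ↔ ∀ l ∈ Λ, ∃ n : ℤ, B μ l = (n : ℝ))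
    (hperp : ∀ μ, μ ∈ perp ↔ ∀ l ∈ Λ, B μ l = 0) :
    ∃ Γ : AddSubgroup h, Γ ≤ dual ∧
      (∃ n : ℕ, Nonempty (Γ ≃+ (Fin n → ℤ))) ∧
      perp ⊓ Γ = ⊥ ∧ perp ⊔ Γ = dual := by
  classical
  -- choose a finite subset `T ⊆ Λ` spanning `span ℝ Λ`
  obtain ⟨T, hTsub, hTspan⟩ :
      ∃ T : Finset h, ↑T ⊆ (Λ : Set h) ∧
        Submodule.span ℝ (T : Set h) = Submodule.span ℝ (Λ : Set h) := by
    have hfg : (Submodule.span ℝ (Λ : Set h)).FG := IsNoetherian.noetherian _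
    obtain ⟨S, hS⟩ := hfg
    have hx : ∀ x ∈ S, ∃ t : Finset h, ↑t ⊆ (Λ : Set h) ∧
        x ∈ Submodule.span ℝ (t : Set h) := by
      intro x hxS
      have : x ∈ Submodule.span ℝ (Λ : Set h) := hS ▸ Submodule.subset_span hxS
      exact Submodule.mem_span_finite_of_mem_span this
    choose t ht1 ht2 using hx
    refine ⟨S.attach.biUnion (fun x => t x.1 x.2), ?_, le_antisymm ?_ ?_⟩
    · intro y hy
      simp only [Finset.coe_biUnion, Set.mem_iUnion] at hy
      obtain ⟨x, _, hy⟩ := hy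
      exact ht1 x.1 x.2 hy
    · refine Submodule.span_le.2 ?_
      intro y hy
      simp only [Finset.coe_biUnion, Set.mem_iUnion] at hy
      obtain ⟨x, _, hy⟩ := hy
      exact Submodule.subset_span (ht1 x.1 x.2 hy)
    · rw [← hS]
      refine Submodule.span_le.2 fun x hxS => ?_
      refine Submodule.span_mono ?_ (ht2 x hxS)
      intro y hy
      simp only [Finset.coe_biUnion, Set.mem_iUnion]
      exact ⟨⟨x, hxS⟩, S.mem_attach _, hy⟩
  set D : Submodule ℤ h := AddSubgroup.toIntSubmodule dual with hD
  have hmemD : ∀ x : h, x ∈ D ↔ x ∈ dual := fun x => Iff.rfl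
  -- key : for μ ∈ dual and l ∈ Λ, B μ l is an integer with floor giving it back
  have key : ∀ μ : D, ∀ l ∈ Λ, ((⌊B (μ : h) l⌋ : ℤ) : ℝ) = B (μ : h) l := by
    intro μ l hl
    obtain ⟨n, hn⟩ := (hdual μ).1 μ.2 l hl
    rw [hn, Int.floor_intCast]
  -- the map dual → ℤ^T
  let φ : D →ₗ[ℤ] ({x // x ∈ T} → ℤ) :=
    AddMonoidHom.toIntLinearMap
      { toFun := fun μ i => ⌊B (μ : h) i.1⌋
        map_zero' := by
          funext i; simp
        map_add' := by
          intro μ ν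
          funext i
          have hiΛ : (i.1 : h) ∈ Λ := hTsub i.2
          apply Int.cast_injective (α := ℝ)
          have h3 := key (μ + ν) _ hiΛ
          push_cast at h3 ⊢
          rw [h3, map_add, LinearMap.add_apply]
          simp only [Pi.add_apply, Int.cast_add, key μ _ hiΛ, key ν _ hiΛ] }
  have hφ : ∀ (μ : D) (i : {x // x ∈ T}), ((φ μ i : ℤ) : ℝ) = B (μ : h) i.1 :=
    fun μ i => key μ _ (hTsub i.2)
  -- kernel of φ is exactly perp (inside dual)
  have hker : ∀ μ : D, φ μ = 0 ↔ (μ : h) ∈ perp := by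
    intro μ
    constructor
    · intro h0
      rw [hperp]
      intro l hl
      have hl' : l ∈ Submodule.span ℝ (T : Set h) :=
        hTspan ▸ Submodule.subset_span hl
      have hTker : (T : Set h) ⊆ (LinearMap.ker (B (μ : h)) : Set h) := by
        intro x hx
        have := hφ μ ⟨x, hx⟩
        rw [congrFun h0 ⟨x, hx⟩] at this
        simpa using this.symm
      have := Submodule.span_le.2 hTker hl'
      simpa using this
    · intro hp
      funext i
      have : B (μ : h) i.1 = 0 := (hperp _).1 hp i.1 (hTsub i.2)
      have h2 := hφ μ i
      rw [this] at h2
      exact_mod_cast h2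
  -- the image N ⊆ ℤ^T is free of finite rank
  set N := LinearMap.range φ with hN
  obtain ⟨n, b⟩ := Submodule.basisOfPid (Pi.basisFun ℤ {x // x ∈ T}) N
  have : Module.Free ℤ N := Module.Free.of_basis b
  -- split the surjection dual → N
  obtain ⟨σ, hσ⟩ := LinearMap.exists_rightInverse_of_surjective
    (φ.rangeRestrict) (LinearMap.range_rangeRestrict φ)
  have hσ' : ∀ x : N, φ.rangeRestrict (σ x) = x := fun x => by
    have := LinearMap.congr_fun hσ x; exact this
  have hφσ : ∀ x : N, φ (σ x) = (x : {x // x ∈ T} → ℤ) := by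
    intro x
    have := hσ' x
    exact congrArg Subtype.val this
  -- injectivity of subtype ∘ σ
  have hinj : Function.Injective (D.subtype.comp σ) := by
    intro x y hxy
    have : σ x = σ y := Subtype.ext hxy
    have := congrArg (φ.rangeRestrict) this
    rwa [hσ' x, hσ' y] at this
  set Γ' : Submodule ℤ h := LinearMap.range (D.subtype.comp σ) with hΓ'
  refine ⟨Γ'.toAddSubgroup, ?_, ?_, ?_, ?_⟩
  · -- Γ ≤ dual
    rintro x ⟨y, rfl⟩
    exact (σ y).2
  · -- Γ is free of finite rank
    refine ⟨n, ⟨?_⟩⟩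
    have e1 : N ≃ₗ[ℤ] Γ' := LinearEquiv.ofInjective (D.subtype.comp σ) hinj
    exact ((e1.symm.trans b.equivFun).trans
      (LinearEquiv.piCongrLeft' ℤ (fun _ => ℤ) (Equiv.refl (Fin n)))).toAddEquiv
  · -- perp ⊓ Γ = ⊥
    rw [AddSubgroup.eq_bot_iff_forall]
    intro x hx
    rw [AddSubgroup.mem_inf] at hx
    obtain ⟨hxp, hxΓ⟩ := hx
    obtain ⟨y, hy⟩ : ∃ y, D.subtype.comp σ y = x := hxΓ
    have hxD : x ∈ D := by rw [← hy]; exact (σ y).2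
    have : φ (σ y) = 0 := by
      have : ((σ y : D) : h) = x := hy
      rw [show (σ y : D) = ⟨x, hxD⟩ from Subtype.ext this]
      exact (hker ⟨x, hxD⟩).2 hxp
    have hy0 : y = 0 := Subtype.ext (by rw [← hφσ y, this]; simp)
    rw [← hy, hy0, map_zero]
  · -- perp ⊔ Γ = dual
    apply le_antisymm
    · apply sup_le
      · intro x hx
        rw [hdual]
        intro l hl
        exact ⟨0, by simpa using (hperp x).1 hx l hl⟩
      · rintro x ⟨y, rfl⟩
        exact (σ y).2
    · intro μ hμ
      set μ' : D := ⟨μ, hμ⟩ with hμ'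
      rw [AddSubgroup.mem_sup]
      set x : D := σ (φ.rangeRestrict μ') with hx
      refine ⟨μ - (x : h), ?_, (x : h), ?_, by abel⟩
      · have h0 : φ (μ' - x) = 0 := by
          rw [map_sub, hφσ (φ.rangeRestrict μ')]
          exact sub_eq_zero_of_eq rfl
        have := (hker (μ' - x)).1 h0
        simpa using this
      · exact ⟨φ.rangeRestrict μ', rfl⟩
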